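/- Fix n ∈ ℕ and work in the polynomial ring R over ℂ with one variable X_A for each subset A ⊆ [n]. For I, J ⊆ [n] define F_{I,J} = Σ_{i ∈ IΔJ} (−1)^{ℓ(i,I)+ℓ(i,J)} X_{IΔ{i}} X_{JΔ{i}} when |I Δ J| is even, and F_{I,J} = −X_I X_J + Σ_{i ∈ IΔJ} (−1)^{ℓ(i,I)+ℓ(i,J)} X_{IΔ{i}} X_{JΔ{i}} when |I Δ J| is odd. Let W be the ℂ-linear span of { F_{I,J} : I, J ⊆ [n], |I Δ J| ≥ 3 }, and let R_+ ⊆ R be the subalgebra generated by the variables X_A with |A| even. Then W ∩ R_+ equals the ℂ-linear span of { F_{I,J} : I, J ⊆ [n], |I| and |J| both odd, |I Δ J| ≥ 4 }. -/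
import Mathlib


open scoped symmDiff
open MvPolynomial

/-- `ℓ(i,A)`: the number of elements of `A` smaller than `i`. -/
def low {n : ℕ} (i : Fin n) (A : Finset (Fin n)) : ℕ :=
  (A.filter (fun a => a < i)).card

/-- The type B quadratic embedding equation `F_{I,J}`. -/
noncomputable def FEq (n : ℕ) (I J : Finset (Fin n)) :
    MvPolynomial (Finset (Fin n)) ℂ :=
  (∑ i ∈ I ∆ J, ((-1 : ℂ) ^ (low i I + low i J)) •
      (X (I ∆ {i}) * X (J ∆ {i})))
  - (if Odd (I ∆ J).card then X I * X J else 0)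

section Aux

variable {n : ℕ}

lemma card_symmDiff_aux (I J : Finset (Fin n)) :
    (I ∆ J).card + 2 * (I ∩ J).card = I.card + J.card := by
  have h1 : (I ∆ J).card = (I \ J).card + (J \ I).card := by
    rw [symmDiff_def, Finset.sup_eq_union]
    exact Finset.card_union_of_disjoint (Finset.sdiff_disjoint.mono_right Finset.sdiff_subset)
  have h2 : (I \ J).card + (I ∩ J).card = I.card := Finset.card_sdiff_add_card_inter I J
  have h3 : (J \ I).card + (J ∩ I).card = J.card := Finset.card_sdiff_add_card_inter J I
  rw [Finset.inter_comm] at h3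
  omega

lemma even_card_symmDiff_iff (I J : Finset (Fin n)) :
    Even (I ∆ J).card ↔ (Even I.card ↔ Even J.card) := by
  have := card_symmDiff_aux I J
  rw [Nat.even_iff, Nat.even_iff, Nat.even_iff]
  omega

lemma even_card_symmDiff_singleton {I : Finset (Fin n)} (h : Odd I.card) (i : Fin n) :
    Even (I ∆ {i}).card := by
  rw [even_card_symmDiff_iff]
  simp [Nat.not_even_iff_odd.2 h]

/-- The projection onto the even subalgebra: kill odd-indexed variables. -/
noncomputable def pE (n : ℕ) :
    MvPolynomial (Finset (Fin n)) ℂ →ₐ[ℂ] MvPolynomial (Finset (Fin n)) ℂ :=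
  aeval (fun A => if Even A.card then X A else 0)

lemma pE_X (A : Finset (Fin n)) : pE n (X A) = if Even A.card then X A else 0 :=
  aeval_X _ A

lemma pE_fix_of_odd {I J : Finset (Fin n)} (hI : Odd I.card) (hJ : Odd J.card) :
    pE n (FEq n I J) = FEq n I J := by
  have hIJ : ¬ Odd (I ∆ J).card := by
    rw [Nat.not_odd_iff_even, even_card_symmDiff_iff]
    simp [Nat.not_even_iff_odd.2 hI, Nat.not_even_iff_odd.2 hJ]
  rw [FEq, if_neg hIJ, sub_zero, map_sum]
  refine Finset.sum_congr rfl fun i _ => ?_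
  rw [map_smul, map_mul, pE_X, pE_X, if_pos (even_card_symmDiff_singleton hI i),
    if_pos (even_card_symmDiff_singleton hJ i)]

lemma pE_zero_of_not_odd {I J : Finset (Fin n)} (h : ¬ (Odd I.card ∧ Odd J.card)) :
    pE n (FEq n I J) = 0 := by
  rw [FEq, map_sub, map_sum]
  have hsum : ∀ i ∈ I ∆ J, pE n (((-1 : ℂ) ^ (low i I + low i J)) •
      (X (I ∆ {i}) * X (J ∆ {i}))) = 0 := by
    intro i _
    rw [map_smul, map_mul, pE_X, pE_X]
    rcases Nat.even_or_odd I.card with hI | hI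
    · have hne : ¬ Even (I ∆ {i}).card := by
        rw [even_card_symmDiff_iff]
        simp [hI, Nat.not_even_iff_odd]
      rw [if_neg hne, zero_mul, smul_zero]
    · have hJ : Even J.card := by
        rcases Nat.even_or_odd J.card with h' | h'
        · exact h'
        · exact absurd ⟨hI, h'⟩ h
      have hne : ¬ Even (J ∆ {i}).card := by
        rw [even_card_symmDiff_iff]
        simp [hJ, Nat.not_even_iff_odd]
      rw [if_neg hne, mul_zero, smul_zero]
  rw [Finset.sum_congr rfl hsum, Finset.sum_const_zero, zero_sub, neg_eq_zero]
  split_ifs with hodd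
  · rw [map_mul, pE_X, pE_X]
    have : ¬ (Even I.card ↔ Even J.card) := by
      rw [← even_card_symmDiff_iff]
      exact Nat.not_even_iff_odd.2 hodd
    rcases Nat.even_or_odd I.card with hI | hI
    · have hJ : ¬ Even J.card := by tauto
      rw [if_neg hJ, mul_zero]
    · rw [if_neg (Nat.not_even_iff_odd.2 hI), zero_mul]
  · exact map_zero _

lemma FEq_mem_adjoin {I J : Finset (Fin n)} (hI : Odd I.card) (hJ : Odd J.card) :
    FEq n I J ∈ Algebra.adjoin ℂ
      {p : MvPolynomial (Finset (Fin n)) ℂ |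
        ∃ A : Finset (Fin n), Even A.card ∧ p = X A} := by
  have hIJ : ¬ Odd (I ∆ J).card := by
    rw [Nat.not_odd_iff_even, even_card_symmDiff_iff]
    simp [Nat.not_even_iff_odd.2 hI, Nat.not_even_iff_odd.2 hJ]
  rw [FEq, if_neg hIJ, sub_zero]
  refine Subalgebra.sum_mem _ fun i _ => Subalgebra.smul_mem _ (mul_mem ?_ ?_) _
  · exact Algebra.subset_adjoin ⟨I ∆ {i}, even_card_symmDiff_singleton hI i, rfl⟩
  · exact Algebra.subset_adjoin ⟨J ∆ {i}, even_card_symmDiff_singleton hJ i, rfl⟩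

lemma pE_fix_of_adjoin {p : MvPolynomial (Finset (Fin n)) ℂ}
    (hp : p ∈ Algebra.adjoin ℂ
      {p : MvPolynomial (Finset (Fin n)) ℂ |
        ∃ A : Finset (Fin n), Even A.card ∧ p = X A}) :
    pE n p = p := by
  induction hp using Algebra.adjoin_induction with
  | mem x hx =>
    obtain ⟨A, hA, rfl⟩ := hx
    rw [pE_X, if_pos hA]
  | algebraMap r => exact AlgHom.commutes _ r
  | add x y _ _ hx hy => rw [map_add, hx, hy]
  | mul x y _ _ hx hy => rw [map_mul, hx, hy]

end Aux

/-- The intersection of the span of the type B quadratic embedding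
equations with the subalgebra generated by the variables indexed by even-cardinality sets
is the span of the type D quadratic embedding equations on the even demicube. -/
theorem typeB_span_inter_even_subalgebra (n : ℕ) :
    Submodule.span ℂ
        {p : MvPolynomial (Finset (Fin n)) ℂ |
          ∃ I J : Finset (Fin n), 3 ≤ (I ∆ J).card ∧ p = FEq n I J}
      ⊓ Subalgebra.toSubmodule (Algebra.adjoin ℂ
          {p : MvPolynomial (Finset (Fin n)) ℂ |
            ∃ A : Finset (Fin n), Even A.card ∧ p = X A})
    = Submodule.span ℂ
        {p : MvPolynomial (Finset (Fin n)) ℂ |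
          ∃ I J : Finset (Fin n),
            Odd I.card ∧ Odd J.card ∧ 4 ≤ (I ∆ J).card ∧ p = FEq n I J} := by
  apply le_antisymm
  · rintro p ⟨hspan, hadj⟩
    have hfix : pE n p = p := pE_fix_of_adjoin hadj
    rw [← hfix]
    clear hfix hadj
    induction hspan using Submodule.span_induction with
    | mem x hx =>
      obtain ⟨I, J, h3, rfl⟩ := hx
      by_cases h : Odd I.card ∧ Odd J.card
      · rw [pE_fix_of_odd h.1 h.2]
        refine Submodule.subset_span ⟨I, J, h.1, h.2, ?_, rfl⟩
        have : Even (I ∆ J).card := by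
          rw [even_card_symmDiff_iff]
          simp [Nat.not_even_iff_odd.2 h.1, Nat.not_even_iff_odd.2 h.2]
        rcases this with ⟨k, hk⟩
        omega
      · rw [pE_zero_of_not_odd h]
        exact Submodule.zero_mem _
    | zero => simp
    | add x y _ _ hx hy => rw [map_add]; exact Submodule.add_mem _ hx hy
    | smul c x _ hx => rw [map_smul]; exact Submodule.smul_mem _ c hx
  · rw [Submodule.span_le]
    rintro p ⟨I, J, hI, hJ, h4, rfl⟩
    refine ⟨Submodule.subset_span ⟨I, J, by omega, rfl⟩, ?_⟩
    exact FEq_mem_adjoin hI hJ
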